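/- If every constraint of a linear program has rational coefficients and the LP has an optimal solution, then it has an optimal solution with all-rational coordinates. -/

import Mathlib

variable {K : Type} [Field K] [LinearOrder K] [IsStrictOrderedRing K]

/-- satisfaction of a rational inequality system over an ordered field -/
def FMSat (K : Type) [Field K] [LinearOrder K] [IsStrictOrderedRing K] {k : ℕ} (L : List ((Fin k → ℚ) × ℚ))
    (x : Fin k → K) : Prop :=
  ∀ p ∈ L, (p.2 : K) ≤ ∑ j, (p.1 j : K) * x j

/-- Fourier–Motzkin elimination of the last variable -/
def FMelim {k : ℕ} (L : List ((Fin (k+1) → ℚ) × ℚ)) : List ((Fin k → ℚ) × ℚ) :=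
  L.flatMap fun p =>
    if p.1 (Fin.last k) = 0 then [(fun j => p.1 j.castSucc, p.2)]
    else if 0 < p.1 (Fin.last k) then
      L.filterMap fun q =>
        if q.1 (Fin.last k) < 0 then
          some (fun j => p.1 (Fin.last k) * q.1 j.castSucc - q.1 (Fin.last k) * p.1 j.castSucc,
                p.1 (Fin.last k) * q.2 - q.1 (Fin.last k) * p.2)
        else none
    else []

lemma fmsat_snoc {k : ℕ} (y : Fin k → K) (t : K) (p : (Fin (k+1) → ℚ) × ℚ) :
    (∑ j, (p.1 j : K) * (Fin.snoc y t : Fin (k+1) → K) j)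
      = (∑ j, (p.1 j.castSucc : K) * y j) + (p.1 (Fin.last k) : K) * t := by
  rw [Fin.sum_univ_castSucc]
  simp

lemma list_max_exists {α : Type*} [LinearOrder α] (l : List α) (h : l ≠ []) :
    ∃ m ∈ l, ∀ x ∈ l, x ≤ m := by
  induction l with
  | nil => exact absurd rfl h
  | cons a l ih =>
    rcases eq_or_ne l [] with rfl | hne
    · exact ⟨a, by simp⟩
    · obtain ⟨m, hm, hmax⟩ := ih hne
      refine ⟨max a m, ?_, ?_⟩
      · rcases max_cases a m with ⟨h1, _⟩ | ⟨h1, _⟩ <;> simp [h1, hm]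
      · intro x hx
        rcases List.mem_cons.1 hx with rfl | hx
        · exact le_max_left _ _
        · exact le_trans (hmax x hx) (le_max_right _ _)

lemma list_foldr_min_le {α : Type*} [LinearOrder α] (l : List α) (i x : α) (h : x ∈ l) :
    l.foldr min i ≤ x := by
  induction l with
  | nil => simp at h
  | cons a l ih =>
    rcases List.mem_cons.1 h with rfl | h
    · exact min_le_left _ _
    · exact le_trans (min_le_right _ _) (ih h)

theorem FMelim_iff {k : ℕ} (L : List ((Fin (k+1) → ℚ) × ℚ)) (y : Fin k → K) :
    FMSat K (FMelim L) y ↔ ∃ t : K, FMSat K L (Fin.snoc y t) := by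
  constructor
  · intro hs
    have hzero : ∀ p ∈ L, p.1 (Fin.last k) = 0 →
        (p.2 : K) ≤ ∑ j, (p.1 j.castSucc : K) * y j := by
      intro p hp h0
      have : (fun j => p.1 j.castSucc, p.2) ∈ FMelim L := by
        rw [FMelim, List.mem_flatMap]
        exact ⟨p, hp, by simp [h0]⟩
      exact hs _ this
    have hcombo : ∀ p ∈ L, ∀ q ∈ L, 0 < p.1 (Fin.last k) → q.1 (Fin.last k) < 0 →
        ((p.1 (Fin.last k) * q.2 - q.1 (Fin.last k) * p.2 : ℚ) : K)
          ≤ ∑ j, ((p.1 (Fin.last k) * q.1 j.castSucc - q.1 (Fin.last k) * p.1 j.castSucc : ℚ) : K) * y j := by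
      intro p hp q hq hpos hneg
      have : (fun j => p.1 (Fin.last k) * q.1 j.castSucc - q.1 (Fin.last k) * p.1 j.castSucc,
                p.1 (Fin.last k) * q.2 - q.1 (Fin.last k) * p.2) ∈ FMelim L := by
        rw [FMelim, List.mem_flatMap]
        refine ⟨p, hp, ?_⟩
        rw [if_neg (by positivity), if_pos hpos, List.mem_filterMap]
        exact ⟨q, hq, by rw [if_pos hneg]⟩
      exact hs _ this
    -- helper: a choice t satisfies a constraint p when suitable bound conditions hold
    set bnd : (Fin (k+1) → ℚ) × ℚ → K :=
      fun p => ((p.2 : K) - ∑ j, (p.1 j.castSucc : K) * y j) / (p.1 (Fin.last k) : K) with hbnd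
    have key : ∀ (t : K),
        (∀ p ∈ L, 0 < p.1 (Fin.last k) → bnd p ≤ t) →
        (∀ p ∈ L, p.1 (Fin.last k) < 0 → t ≤ bnd p) →
        FMSat K L (Fin.snoc y t) := by
      intro t hlo hhi p hp
      rw [fmsat_snoc]
      rcases lt_trichotomy (p.1 (Fin.last k)) 0 with hneg | h0 | hpos
      · have hKneg : ((p.1 (Fin.last k) : K)) < 0 := by exact_mod_cast hneg
        have := hhi p hp hneg
        rw [hbnd, le_div_iff_of_neg hKneg] at this
        linarith [this]
      · have := hzero p hp h0
        rw [h0]; push_cast; linarith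
      · have hKpos : (0:K) < ((p.1 (Fin.last k) : K)) := by exact_mod_cast hpos
        have := hlo p hp hpos
        rw [hbnd, div_le_iff₀ hKpos] at this
        linarith [this]
    set P := L.filter (fun p => 0 < p.1 (Fin.last k)) with hP
    by_cases hPe : P = []
    · refine ⟨(L.filter (fun p => p.1 (Fin.last k) < 0)).foldr (fun p r => min (bnd p) r) 0, key _ ?_ ?_⟩
      · intro p hp hpos
        have hmem : p ∈ P := List.mem_filter.2 ⟨hp, by simpa using hpos⟩
        rw [hPe] at hmem
        simp at hmem
      · intro p hp hneg
        have : ((L.filter (fun p => p.1 (Fin.last k) < 0)).foldr (fun p r => min (bnd p) r) 0)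
            = ((L.filter (fun p => p.1 (Fin.last k) < 0)).map bnd).foldr min 0 := by
          rw [List.foldr_map]
        rw [this]
        exact list_foldr_min_le _ _ _
          (List.mem_map_of_mem (List.mem_filter.2 ⟨hp, by simpa using hneg⟩))
    · obtain ⟨mv, hmv, hmax⟩ := list_max_exists (P.map bnd) (by simpa using hPe)
      obtain ⟨p0, hp0P, hp0⟩ := List.mem_map.1 hmv
      have hp0L : p0 ∈ L := (List.mem_filter.1 hp0P).1
      have hp0pos : 0 < p0.1 (Fin.last k) := by simpa using (List.mem_filter.1 hp0P).2
      refine ⟨mv, key mv ?_ ?_⟩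
      · intro p hp hpos
        exact hmax _ (List.mem_map_of_mem (List.mem_filter.2 ⟨hp, by simpa using hpos⟩))
      · intro q hq hneg
        -- mv = bnd p0 ≤ bnd q using combo constraint
        rw [← hp0]
        have hc := hcombo p0 hp0L q hq hp0pos hneg
        have hap : (0:K) < (p0.1 (Fin.last k) : K) := by exact_mod_cast hp0pos
        have haq : ((q.1 (Fin.last k) : K)) < 0 := by exact_mod_cast hneg
        push_cast at hc
        have hsum : (∑ j, ((p0.1 (Fin.last k) : K) * (q.1 j.castSucc : K)
              - (q.1 (Fin.last k) : K) * (p0.1 j.castSucc : K)) * y j)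
            = (p0.1 (Fin.last k) : K) * (∑ j, (q.1 j.castSucc : K) * y j)
              - (q.1 (Fin.last k) : K) * (∑ j, (p0.1 j.castSucc : K) * y j) := by
          rw [Finset.mul_sum, Finset.mul_sum, ← Finset.sum_sub_distrib]
          congr 1; ext j; ring
        rw [hsum] at hc
        have e1 : bnd p0 * (p0.1 (Fin.last k) : K)
            = (p0.2 : K) - ∑ j, (p0.1 j.castSucc : K) * y j := by
          simp only [hbnd]; exact div_mul_cancel₀ _ (ne_of_gt hap)
        have e2 : bnd q * (q.1 (Fin.last k) : K)
            = (q.2 : K) - ∑ j, (q.1 j.castSucc : K) * y j := by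
          simp only [hbnd]; exact div_mul_cancel₀ _ (ne_of_lt haq)
        nlinarith [hc, e1, e2, mul_neg_of_pos_of_neg hap haq]
  · rintro ⟨t, hs⟩
    intro e he
    rw [FMelim, List.mem_flatMap] at he
    obtain ⟨p, hp, hep⟩ := he
    by_cases h0 : p.1 (Fin.last k) = 0
    · rw [if_pos h0] at hep
      simp only [List.mem_singleton] at hep
      subst hep
      have := hs p hp
      rw [fmsat_snoc, h0] at this
      push_cast at this
      simpa using this
    · rw [if_neg h0] at hep
      by_cases hpos : 0 < p.1 (Fin.last k)
      · rw [if_pos hpos, List.mem_filterMap] at hep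
        obtain ⟨q, hq, hqe⟩ := hep
        by_cases hneg : q.1 (Fin.last k) < 0
        · rw [if_pos hneg, Option.some_inj] at hqe
          subst hqe
          have h1 := hs p hp
          have h2 := hs q hq
          rw [fmsat_snoc] at h1 h2
          have hap : (0:K) < (p.1 (Fin.last k) : K) := by exact_mod_cast hpos
          have haq : ((q.1 (Fin.last k) : K)) < 0 := by exact_mod_cast hneg
          simp only
          have hsum : (∑ j, ((p.1 (Fin.last k) * q.1 j.castSucc - q.1 (Fin.last k) * p.1 j.castSucc : ℚ) : K) * y j)
              = (p.1 (Fin.last k) : K) * (∑ j, (q.1 j.castSucc : K) * y j)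
                - (q.1 (Fin.last k) : K) * (∑ j, (p.1 j.castSucc : K) * y j) := by
            push_cast
            rw [Finset.mul_sum, Finset.mul_sum, ← Finset.sum_sub_distrib]
            congr 1; ext j; ring
          rw [hsum]
          push_cast
          nlinarith [h1, h2]
        · rw [if_neg hneg] at hqe; exact absurd hqe (by simp)
      · rw [if_neg hpos] at hep; simp at hep

/-- solvable over ℝ implies solvable over ℚ -/
theorem fm_solvable_rat : ∀ {k : ℕ} (L : List ((Fin k → ℚ) × ℚ)),
    (∃ x : Fin k → ℝ, FMSat ℝ L x) → ∃ q : Fin k → ℚ, FMSat ℚ L q := by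
  intro k
  induction k with
  | zero =>
    rintro L ⟨x, hx⟩
    refine ⟨fun _ => 0, fun p hp => ?_⟩
    have := hx p hp
    simp only [Finset.univ_eq_empty, Finset.sum_empty] at this ⊢
    exact_mod_cast this
  | succ k ih =>
    rintro L ⟨x, hx⟩
    have h1 : FMSat ℝ (FMelim L) (Fin.init x) := by
      rw [FMelim_iff]
      exact ⟨x (Fin.last k), by rwa [Fin.snoc_init_self]⟩
    obtain ⟨q', hq'⟩ := ih (FMelim L) ⟨Fin.init x, h1⟩
    rw [FMelim_iff] at hq'
    obtain ⟨t, ht⟩ := hq'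
    exact ⟨Fin.snoc q' t, ht⟩

/-- iterated elimination down to the first variable -/
def projDown : ∀ {k : ℕ}, List ((Fin (k+1) → ℚ) × ℚ) → List ((Fin 1 → ℚ) × ℚ)
  | 0, L => L
  | (_+1), L => projDown (FMelim L)

theorem projDown_iff : ∀ {k : ℕ} (L : List ((Fin (k+1) → ℚ) × ℚ)) (t : K),
    FMSat K (projDown L) (fun _ => t) ↔ ∃ x : Fin (k+1) → K, x 0 = t ∧ FMSat K L x := by
  intro k
  induction k with
  | zero =>
    intro L t
    constructor
    · intro hs
      exact ⟨fun _ => t, rfl, hs⟩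
    · rintro ⟨x, hx0, hs⟩
      have : x = fun _ => t := funext fun j => by rw [Fin.eq_zero j]; exact hx0
      rwa [this] at hs
  | succ k ih =>
    intro L t
    rw [show projDown L = projDown (FMelim L) from rfl, ih]
    constructor
    · rintro ⟨x', hx0, hs⟩
      rw [FMelim_iff] at hs
      obtain ⟨t0, ht0⟩ := hs
      refine ⟨Fin.snoc x' t0, ?_, ht0⟩
      rw [show (0 : Fin (k+2)) = Fin.castSucc 0 from rfl, Fin.snoc_castSucc]
      exact hx0
    · rintro ⟨x, hx0, hs⟩
      refine ⟨Fin.init x, ?_, (FMelim_iff _ _).2 ⟨x (Fin.last _), by rwa [Fin.snoc_init_self]⟩⟩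
      rw [show (Fin.init x) 0 = x (Fin.castSucc 0) from rfl]
      exact hx0

/-- a one-variable rational system whose solution set is [v, ∞) has v rational -/
lemma one_var_value (L : List ((Fin 1 → ℚ) × ℚ)) (v : ℝ)
    (h : ∀ t : ℝ, FMSat ℝ L (fun _ => t) ↔ v ≤ t) : ∃ α : ℚ, (α : ℝ) = v := by
  have hv : FMSat ℝ L (fun _ => v) := (h v).2 le_rfl
  have hnegfree : ∀ p ∈ L, ¬ (p.1 0 < 0) := by
    intro p hp hneg
    have ha : ((p.1 0 : ℝ)) < 0 := by exact_mod_cast hneg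
    set t := max v ((p.2 : ℝ) / (p.1 0 : ℝ) + 1) with htdef
    have h1 := ((h t).2 (le_max_left _ _)) p hp
    rw [Fin.sum_univ_one] at h1
    have h2 : (p.2 : ℝ) / (p.1 0 : ℝ) + 1 ≤ t := le_max_right _ _
    have h3 : (p.1 0 : ℝ) * t ≤ (p.1 0 : ℝ) * ((p.2 : ℝ) / (p.1 0 : ℝ) + 1) :=
      mul_le_mul_of_nonpos_left h2 (le_of_lt ha)
    have h4 : (p.1 0 : ℝ) * ((p.2 : ℝ) / (p.1 0 : ℝ) + 1) = (p.2 : ℝ) + (p.1 0 : ℝ) := by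
      rw [mul_add, mul_one, mul_comm, div_mul_cancel₀ _ (ne_of_lt ha)]
    linarith
  have hzero : ∀ p ∈ L, p.1 0 = 0 → p.2 ≤ 0 := by
    intro p hp h0
    have := hv p hp
    rw [Fin.sum_univ_one, h0] at this
    push_cast at this
    exact_mod_cast (by linarith : (p.2 : ℝ) ≤ 0)
  set P := L.filter (fun p => 0 < p.1 0) with hP
  have hPne : P ≠ [] := by
    intro hPe
    have hsat : FMSat ℝ L (fun _ => v - 1) := by
      intro p hp
      rw [Fin.sum_univ_one]
      rcases lt_trichotomy (p.1 0) 0 with hneg | h0 | hpos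
      · exact absurd hneg (hnegfree p hp)
      · rw [h0]
        push_cast
        have : (p.2 : ℝ) ≤ 0 := by exact_mod_cast hzero p hp h0
        linarith
      · have hmem : p ∈ P := List.mem_filter.2 ⟨hp, by simpa using hpos⟩
        rw [hPe] at hmem
        simp at hmem
    have := (h (v - 1)).1 hsat
    linarith
  obtain ⟨m, hm, hmax⟩ := list_max_exists (P.map (fun p => p.2 / p.1 0)) (by simpa using hPne)
  obtain ⟨p0, hp0P, hp0⟩ := List.mem_map.1 hm
  have hp0L : p0 ∈ L := (List.mem_filter.1 hp0P).1
  have hp0pos : 0 < p0.1 0 := by simpa using (List.mem_filter.1 hp0P).2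
  have hsat : FMSat ℝ L (fun _ => (m : ℝ)) := by
    intro p hp
    rw [Fin.sum_univ_one]
    rcases lt_trichotomy (p.1 0) 0 with hneg | h0 | hpos
    · exact absurd hneg (hnegfree p hp)
    · rw [h0]
      push_cast
      have : (p.2 : ℝ) ≤ 0 := by exact_mod_cast hzero p hp h0
      linarith
    · have hble : p.2 / p.1 0 ≤ m :=
        hmax _ (List.mem_map_of_mem (List.mem_filter.2 ⟨hp, by simpa using hpos⟩))
      have : p.2 ≤ p.1 0 * m := by
        rw [div_le_iff₀ hpos] at hble
        linarith
      show (p.2 : ℝ) ≤ (p.1 0 : ℝ) * (m : ℝ)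
      exact_mod_cast this
  have h1 : v ≤ (m : ℝ) := (h m).1 hsat
  have h2 : (m : ℝ) ≤ v := by
    have hvp := hv p0 hp0L
    rw [Fin.sum_univ_one] at hvp
    have hpos' : (0 : ℝ) < (p0.1 0 : ℝ) := by exact_mod_cast hp0pos
    rw [← hp0]
    push_cast
    rw [div_le_iff₀ hpos']
    linarith [hvp]
  exact ⟨m, le_antisymm h2 h1⟩

lemma cons_sum {n : ℕ} (a0 : ℚ) (f : Fin n → ℚ) (z : Fin (n+1) → ℝ) :
    (∑ j, ((Fin.cons a0 f : Fin (n+1) → ℚ) j : ℝ) * z j)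
      = (a0 : ℝ) * z 0 + ∑ j, (f j : ℝ) * z j.succ := by
  rw [Fin.sum_univ_succ]
  simp

/-- If every constraint of a linear program (min cᵀx s.t. Ax ≥ b, rational A, b, c,
interpreted over ℝ) has rational coefficients and the LP has an optimal solution,
then it has an optimal solution with all-rational coordinates. -/
theorem rational_lp_has_rational_optimum
    (m n : ℕ) (A : Fin m → Fin n → ℚ) (b : Fin m → ℚ) (c : Fin n → ℚ)
    (x : Fin n → ℝ)
    (hfeas : ∀ i, (b i : ℝ) ≤ ∑ j, (A i j : ℝ) * x j)
    (hopt : ∀ y : Fin n → ℝ, (∀ i, (b i : ℝ) ≤ ∑ j, (A i j : ℝ) * y j) →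
      ∑ j, (c j : ℝ) * x j ≤ ∑ j, (c j : ℝ) * y j) :
    ∃ q : Fin n → ℚ, (∀ i, b i ≤ ∑ j, A i j * q j) ∧
      ((∑ j, (c j : ℝ) * (q j : ℝ)) = ∑ j, (c j : ℝ) * x j) := by
  set val := ∑ j, (c j : ℝ) * x j with hval
  set Lfull : List ((Fin (n+1) → ℚ) × ℚ) :=
    (List.ofFn fun i => (Fin.cons 0 (A i), b i)) ++ [(Fin.cons 1 (fun j => -c j), 0)] with hLfull
  have satLfull : ∀ z : Fin (n+1) → ℝ, FMSat ℝ Lfull z ↔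
      ((∀ i, (b i : ℝ) ≤ ∑ j, (A i j : ℝ) * z j.succ) ∧ (∑ j, (c j : ℝ) * z j.succ ≤ z 0)) := by
    intro z
    constructor
    · intro hs
      constructor
      · intro i
        have := hs (Fin.cons 0 (A i), b i)
          (by rw [hLfull]; exact List.mem_append_left _ (List.mem_ofFn.2 ⟨i, rfl⟩))
        rw [cons_sum] at this
        push_cast at this
        linarith [this]
      · have := hs (Fin.cons 1 (fun j => -c j), 0)
          (by rw [hLfull]; exact List.mem_append_right _ (List.mem_singleton.2 rfl))
        rw [cons_sum] at this
        push_cast at this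
        have hsum : ∑ j, (-(c j : ℝ)) * z j.succ = -∑ j, (c j : ℝ) * z j.succ := by
          rw [← Finset.sum_neg_distrib]
          congr 1; ext j; ring
        rw [hsum] at this
        linarith [this]
    · rintro ⟨h1, h2⟩ p hp
      rw [hLfull, List.mem_append] at hp
      rcases hp with hp | hp
      · rw [List.mem_ofFn] at hp
        obtain ⟨i, rfl⟩ := hp
        rw [cons_sum]
        push_cast
        linarith [h1 i]
      · rw [List.mem_singleton] at hp
        subst hp
        rw [cons_sum]
        push_cast
        have hsum : ∑ j, (-(c j : ℝ)) * z j.succ = -∑ j, (c j : ℝ) * z j.succ := by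
          rw [← Finset.sum_neg_distrib]
          congr 1; ext j; ring
        rw [hsum]
        linarith [h2]
  have hT : ∀ t : ℝ, FMSat ℝ (projDown Lfull) (fun _ => t) ↔ val ≤ t := by
    intro t
    rw [projDown_iff]
    constructor
    · rintro ⟨z, hz0, hz⟩
      obtain ⟨hfz, hcz⟩ := (satLfull z).1 hz
      calc val ≤ ∑ j, (c j : ℝ) * z j.succ := hopt _ hfz
        _ ≤ z 0 := hcz
        _ = t := hz0
    · intro hvt
      refine ⟨Fin.cons t x, rfl, (satLfull _).2 ⟨?_, ?_⟩⟩
      · intro i; simpa using hfeas i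
      · simp only [Fin.cons_succ, Fin.cons_zero]
        exact le_trans (le_of_eq hval.symm) hvt
  obtain ⟨α, hα⟩ := one_var_value (projDown Lfull) val hT
  set LA : List ((Fin n → ℚ) × ℚ) :=
    (List.ofFn fun i => (A i, b i)) ++ [((fun j => -c j : Fin n → ℚ), -α)] with hLA
  have hxA : FMSat ℝ LA x := by
    intro p hp
    rw [hLA, List.mem_append] at hp
    rcases hp with hp | hp
    · rw [List.mem_ofFn] at hp
      obtain ⟨i, rfl⟩ := hp
      exact hfeas i
    · rw [List.mem_singleton] at hp
      subst hp
      have hsum : ∑ j, ((-c j : ℚ) : ℝ) * x j = -val := by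
        rw [hval, ← Finset.sum_neg_distrib]
        congr 1; ext j; push_cast; ring
      rw [hsum]
      push_cast
      linarith [hα.ge, hα.le]
  obtain ⟨q, hq⟩ := fm_solvable_rat LA ⟨x, hxA⟩
  have hqfeas : ∀ i, b i ≤ ∑ j, A i j * q j := by
    intro i
    have := hq (A i, b i)
      (by rw [hLA]; exact List.mem_append_left _ (List.mem_ofFn.2 ⟨i, rfl⟩))
    simpa using this
  refine ⟨q, hqfeas, ?_⟩
  have hcq : ∑ j, c j * q j ≤ α := by
    have := hq ((fun j => -c j : Fin n → ℚ), -α)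
      (by rw [hLA]; exact List.mem_append_right _ (List.mem_singleton.2 rfl))
    simp only [Rat.cast_id] at this
    have hsum : ∑ j, (-c j) * q j = -∑ j, c j * q j := by
      rw [← Finset.sum_neg_distrib]
      congr 1; ext j; ring
    rw [hsum] at this
    linarith [this]
  have hfeasq : ∀ i, (b i : ℝ) ≤ ∑ j, (A i j : ℝ) * (q j : ℝ) := by
    intro i
    exact_mod_cast hqfeas i
  have h1 : val ≤ ∑ j, (c j : ℝ) * (q j : ℝ) := hopt _ hfeasq
  have h2 : ∑ j, (c j : ℝ) * (q j : ℝ) ≤ (α : ℝ) := by exact_mod_cast hcq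
  linarith [hα.le, hα.ge, h1, h2]
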